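/- Let D be a (v,k,λ)-difference set in a finite abelian group G. Then |Dg ∩ (Dg)^(−1)| ∈ {k, λ} for all g ∈ G if and only if −1 is a multiplier of D (i.e., D^(−1) is a translate of D). -/

import Mathlib

def IsDiffSet {G : Type*} [Group G] [Fintype G] [DecidableEq G]
    (v k l : ℕ) (D : Finset G) : Prop :=
  Fintype.card G = v ∧ D.card = k ∧
    ∀ g : G, g ≠ 1 → ((D ×ˢ D).filter (fun p => p.1 * p.2⁻¹ = g)).card = l

/-- For an abelian difference set `D`: `|Dg ∩ (Dg)⁽⁻¹⁾| ∈ {k, λ}` for all `g` iff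
`−1` is a multiplier of `D` (i.e. `D⁽⁻¹⁾` is a translate of `D`). -/
theorem stmt7 {G : Type*} [CommGroup G] [Fintype G] [DecidableEq G]
    (v k l : ℕ) (D : Finset G) (hD : IsDiffSet v k l D) (hkl : 1 < k - l) :
    (∀ g : G,
        ((D.image (fun d => d * g)) ∩
            ((D.image (fun d => d * g)).image (fun x => x⁻¹))).card = k ∨
        ((D.image (fun d => d * g)) ∩
            ((D.image (fun d => d * g)).image (fun x => x⁻¹))).card = l) ↔
      ∃ g : G, D.image (fun x => x⁻¹) = D.image (fun d => d * g) := by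
  obtain ⟨hv, hk, hM⟩ := hD
  have hlk : l < k := by omega
  -- Key rewriting of the intersection
  have hA : ∀ g : G, (D.image (fun d => d * g)) ∩
      ((D.image (fun d => d * g)).image (fun x => x⁻¹))
      = (D.filter (fun a => a⁻¹ * (g⁻¹ * g⁻¹) ∈ D)).image (fun d => d * g) := by
    intro g
    ext x
    simp only [Finset.mem_inter, Finset.mem_image, Finset.mem_filter]
    constructor
    · rintro ⟨⟨a, ha, rfl⟩, y, ⟨b, hb, rfl⟩, hy⟩
      have h2 : b * g = (a * g)⁻¹ := by rw [← hy, inv_inv]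
      have h3 : b = a⁻¹ * (g⁻¹ * g⁻¹) := by
        have : b = (a * g)⁻¹ * g⁻¹ := by rw [← h2]; group
        rw [this, mul_inv_rev, mul_comm g⁻¹ a⁻¹, mul_assoc]
      exact ⟨a, ⟨ha, h3 ▸ hb⟩, rfl⟩
    · rintro ⟨a, ⟨ha, ha2⟩, rfl⟩
      refine ⟨⟨a, ha, rfl⟩, (a * g)⁻¹, ⟨a⁻¹ * (g⁻¹ * g⁻¹), ha2, ?_⟩, inv_inv _⟩
      rw [mul_inv_rev, mul_comm g⁻¹ a⁻¹]; group
  have hAc : ∀ g : G, ((D.image (fun d => d * g)) ∩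
      ((D.image (fun d => d * g)).image (fun x => x⁻¹))).card
      = (D.filter (fun a => a⁻¹ * (g⁻¹ * g⁻¹) ∈ D)).card := by
    intro g
    rw [hA g, Finset.card_image_of_injective _ (mul_left_injective g)]
  -- counting translates inside D
  have hcount : ∀ x : G, x ≠ 1 → (D.filter (fun a => a * x ∈ D)).card = l := by
    intro x hx
    rw [← hM x hx]
    apply Finset.card_nbij' (fun a => (a * x, a)) (fun p => p.2)
    · intro a ha
      simp only [Finset.mem_filter, Finset.mem_product, Finset.mem_coe] at ha ⊢
      refine ⟨⟨ha.2, ha.1⟩, ?_⟩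
      rw [mul_comm a x]; exact mul_inv_cancel_right x a
    · intro p hp
      simp only [Finset.mem_filter, Finset.mem_product, Finset.mem_coe] at hp ⊢
      refine ⟨hp.1.2, ?_⟩
      have : p.2 * x = p.1 := by
        rw [← hp.2, mul_comm p.1 p.2⁻¹, mul_inv_cancel_left]
      rw [this]; exact hp.1.1
    · intro a _; rfl
    · intro p hp
      simp only [Finset.mem_filter, Finset.mem_product, Finset.mem_coe] at hp
      have : p.2 * x = p.1 := by
        rw [← hp.2, mul_comm p.1 p.2⁻¹, mul_inv_cancel_left]
      exact Prod.ext this rfl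
  constructor
  · intro hall
    by_cases hex : ∃ g : G, ((D.image (fun d => d * g)) ∩
        ((D.image (fun d => d * g)).image (fun x => x⁻¹))).card = k
    · obtain ⟨g, hg⟩ := hex
      rw [hAc g] at hg
      have hfil : D.filter (fun a => a⁻¹ * (g⁻¹ * g⁻¹) ∈ D) = D :=
        Finset.eq_of_subset_of_card_le (Finset.filter_subset _ _)
          (le_of_eq (by rw [hg, hk]))
      have hmem : ∀ a ∈ D, a⁻¹ * (g⁻¹ * g⁻¹) ∈ D := by
        intro a ha
        have h2 : a ∈ D.filter (fun a => a⁻¹ * (g⁻¹ * g⁻¹) ∈ D) := by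
          rw [hfil]; exact ha
        exact (Finset.mem_filter.mp h2).2
      refine ⟨(g⁻¹ * g⁻¹)⁻¹, ?_⟩
      refine (Finset.eq_of_subset_of_card_le ?_ ?_).symm
      · intro x hx
        obtain ⟨a, ha, rfl⟩ := Finset.mem_image.mp hx
        refine Finset.mem_image.mpr ⟨a⁻¹ * (g⁻¹ * g⁻¹), hmem a ha, ?_⟩
        group
        exact mul_comm _ _
      · rw [Finset.card_image_of_injective _ (mul_left_injective _),
          Finset.card_image_of_injective _ (inv_injective)]
    · push_neg at hex
      have hl : ∀ g : G, ((D.image (fun d => d * g)) ∩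
          ((D.image (fun d => d * g)).image (fun x => x⁻¹))).card = l :=
        fun g => (hall g).resolve_left (hex g)
      exfalso
      set Hs : Finset G := Finset.univ.filter (fun h => ∃ x : G, x * x = h) with hHs
      have h1H : (1 : G) ∈ Hs := by
        simp only [hHs, Finset.mem_filter, Finset.mem_univ, true_and]
        exact ⟨1, one_mul 1⟩
      have hNl : ∀ h ∈ Hs, ((D ×ˢ D).filter (fun p => p.1 * p.2 = h)).card = l := by
        intro h hh
        obtain ⟨x, hx⟩ : ∃ x : G, x * x = h := by
          simpa only [hHs, Finset.mem_filter, Finset.mem_univ, true_and] using hh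
        have hthis := hl x⁻¹
        rw [hAc x⁻¹] at hthis
        simp only [inv_inv] at hthis
        rw [hx] at hthis
        rw [← hthis]
        apply Finset.card_nbij' (fun p => p.1) (fun a => (a, a⁻¹ * h))
        · intro p hp
          simp only [Finset.mem_filter, Finset.mem_product, Finset.mem_coe] at hp ⊢
          refine ⟨hp.1.1, ?_⟩
          have : p.1⁻¹ * h = p.2 := by rw [← hp.2]; group
          rw [this]; exact hp.1.2
        · intro a ha
          simp only [Finset.mem_filter, Finset.mem_product, Finset.mem_coe] at ha ⊢
          exact ⟨⟨ha.1, ha.2⟩, by group⟩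
        · intro p hp
          simp only [Finset.mem_filter, Finset.mem_product, Finset.mem_coe] at hp
          have : p.1⁻¹ * h = p.2 := by rw [← hp.2]; group
          exact Prod.ext rfl this
        · intro a _; rfl
      have hMk : ((D ×ˢ D).filter (fun p => p.1 * p.2⁻¹ = (1 : G))).card = k := by
        rw [← hk]
        apply (Finset.card_nbij' (fun a => (a, a)) (fun p => p.1) ?_ ?_ ?_ ?_).symm
        · intro a ha
          simp only [Finset.mem_filter, Finset.mem_product, Finset.mem_coe]
          exact ⟨⟨ha, ha⟩, by group⟩
        · intro p hp
          simp only [Finset.mem_filter, Finset.mem_product, Finset.mem_coe] at hp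
          exact hp.1.1
        · intro a _; rfl
        · intro p hp
          simp only [Finset.mem_filter, Finset.mem_product, Finset.mem_coe] at hp
          have : p.1 = p.2 := by
            have := hp.2
            rwa [mul_inv_eq_one] at this
          exact Prod.ext rfl this
      -- the two global filters agree
      have hPP : (D ×ˢ D).filter (fun p => p.1 * p.2 ∈ Hs)
          = (D ×ˢ D).filter (fun p => p.1 * p.2⁻¹ ∈ Hs) := by
        apply Finset.filter_congr
        intro p _
        simp only [hHs, Finset.mem_filter, Finset.mem_univ, true_and]
        constructor
        · rintro ⟨x, hx⟩
          refine ⟨x * p.2⁻¹, ?_⟩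
          rw [mul_mul_mul_comm, hx]; group
        · rintro ⟨x, hx⟩
          refine ⟨x * p.2, ?_⟩
          rw [mul_mul_mul_comm, hx]; group
      have hcard1 : ((D ×ˢ D).filter (fun p => p.1 * p.2 ∈ Hs)).card = Hs.card * l := by
        have hfib : ∀ h ∈ Hs,
            (((D ×ˢ D).filter (fun p => p.1 * p.2 ∈ Hs)).filter
              (fun p => p.1 * p.2 = h)).card = l := by
          intro h hh
          rw [Finset.filter_filter]
          have heq : ((D ×ˢ D).filter (fun p => p.1 * p.2 ∈ Hs ∧ p.1 * p.2 = h))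
              = ((D ×ˢ D).filter (fun p => p.1 * p.2 = h)) := by
            apply Finset.filter_congr
            intro p _
            exact ⟨fun h2 => h2.2, fun h2 => ⟨h2 ▸ hh, h2⟩⟩
          rw [heq]
          exact hNl h hh
        calc ((D ×ˢ D).filter (fun p => p.1 * p.2 ∈ Hs)).card
            = ∑ h ∈ Hs, (((D ×ˢ D).filter (fun p => p.1 * p.2 ∈ Hs)).filter
                (fun p => p.1 * p.2 = h)).card :=
              Finset.card_eq_sum_card_fiberwise (fun p hp => (Finset.mem_filter.mp hp).2)
          _ = ∑ _h ∈ Hs, l := Finset.sum_congr rfl hfib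
          _ = Hs.card * l := by rw [Finset.sum_const, smul_eq_mul]
      have hcard2 : ((D ×ˢ D).filter (fun p => p.1 * p.2⁻¹ ∈ Hs)).card
          = (Hs.card - 1) * l + k := by
        have hfib : ∀ h ∈ Hs,
            (((D ×ˢ D).filter (fun p => p.1 * p.2⁻¹ ∈ Hs)).filter
              (fun p => p.1 * p.2⁻¹ = h)).card
            = ((D ×ˢ D).filter (fun p => p.1 * p.2⁻¹ = h)).card := by
          intro h hh
          rw [Finset.filter_filter]
          congr 1
          apply Finset.filter_congr
          intro p _
          exact ⟨fun h2 => h2.2, fun h2 => ⟨h2 ▸ hh, h2⟩⟩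
        have herase : ∀ h ∈ Hs.erase 1,
            ((D ×ˢ D).filter (fun p => p.1 * p.2⁻¹ = h)).card = l := by
          intro h hh
          exact hM h (Finset.ne_of_mem_erase hh)
        calc ((D ×ˢ D).filter (fun p => p.1 * p.2⁻¹ ∈ Hs)).card
            = ∑ h ∈ Hs, (((D ×ˢ D).filter (fun p => p.1 * p.2⁻¹ ∈ Hs)).filter
                (fun p => p.1 * p.2⁻¹ = h)).card :=
              Finset.card_eq_sum_card_fiberwise (fun p hp => (Finset.mem_filter.mp hp).2)
          _ = ∑ h ∈ Hs, ((D ×ˢ D).filter (fun p => p.1 * p.2⁻¹ = h)).card :=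
              Finset.sum_congr rfl hfib
          _ = (Hs.card - 1) * l + k := by
              rw [← Finset.add_sum_erase Hs _ h1H, hMk,
                Finset.sum_congr rfl herase, Finset.sum_const, smul_eq_mul,
                Finset.card_erase_of_mem h1H]
              ring
      rw [hPP, hcard2] at hcard1
      obtain ⟨m, hm⟩ : ∃ m, Hs.card = m + 1 :=
        ⟨Hs.card - 1, by have := Finset.card_pos.mpr ⟨1, h1H⟩; omega⟩
      rw [hm] at hcard1
      simp only [Nat.add_sub_cancel, add_mul, one_mul] at hcard1
      omega
  · rintro ⟨c, hc⟩ g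
    rw [hAc g]
    have hmem : ∀ a ∈ D, a⁻¹ * c⁻¹ ∈ D := by
      intro a ha
      have h1 : a⁻¹ ∈ D.image (fun d => d * c) := hc ▸ Finset.mem_image_of_mem _ ha
      obtain ⟨d, hd, hdc⟩ := Finset.mem_image.mp h1
      have : a⁻¹ * c⁻¹ = d := by rw [← hdc]; group
      rw [this]; exact hd
    have hbij : (D.filter (fun a => a⁻¹ * (g⁻¹ * g⁻¹) ∈ D)).card
        = (D.filter (fun b => b * (c * (g⁻¹ * g⁻¹)) ∈ D)).card := by
      apply Finset.card_nbij' (fun a => a⁻¹ * c⁻¹) (fun b => b⁻¹ * c⁻¹)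
      · intro a ha
        simp only [Finset.mem_filter, Finset.mem_coe] at ha ⊢
        refine ⟨hmem a ha.1, ?_⟩
        have : a⁻¹ * c⁻¹ * (c * (g⁻¹ * g⁻¹)) = a⁻¹ * (g⁻¹ * g⁻¹) := by group
        rw [this]; exact ha.2
      · intro b hb
        simp only [Finset.mem_filter, Finset.mem_coe] at hb ⊢
        refine ⟨hmem b hb.1, ?_⟩
        have : (b⁻¹ * c⁻¹)⁻¹ * (g⁻¹ * g⁻¹) = b * (c * (g⁻¹ * g⁻¹)) := by
          rw [mul_inv_rev, inv_inv, inv_inv, mul_comm c b]; group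
        rw [this]; exact hb.2
      · intro a _
        dsimp only; rw [mul_inv_rev, inv_inv, inv_inv, mul_comm c a]
        group
      · intro b _
        dsimp only; rw [mul_inv_rev, inv_inv, inv_inv, mul_comm c b]
        group
    rw [hbij]
    by_cases hone : c * (g⁻¹ * g⁻¹) = 1
    · left
      rw [hone]
      rw [Finset.filter_true_of_mem (fun b hb => by simpa using hb)]
      exact hk
    · right
      exact hcount _ hone
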